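/- Let $w, w' \in [0,1]^n$ with $\mathrm{supp}(w') \subseteq \mathrm{supp}(w)$ and $\|w - w'\|_1 \cdot L \le 1/2$. If $w$ is $(L,R)$-good for $(X,y)$, then for all $i \in \mathrm{supp}(w)$, the weighted OLS predictions satisfy $|x_i^\top \beta_w - x_i^\top \beta_{w'}| \le 2\|w - w'\|_1\, L R$. Consequently, $w'$ is $(\eta L, \eta R)$-good for $(X,y)$ with $\eta = 1 + 2L\|w - w'\|_1$. -/

import Mathlib

open Matrix


section aux
variable {n d : ℕ}

lemma quadform_eq (X : Matrix (Fin n) (Fin d) ℝ) (c : Fin n → ℝ) (v : Fin d → ℝ) :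
    v ⬝ᵥ ((Xᵀ * Matrix.diagonal c * X) *ᵥ v) = ∑ i, c i * (X i ⬝ᵥ v) ^ 2 := by
  rw [← Matrix.mulVec_mulVec, ← Matrix.mulVec_mulVec, Matrix.dotProduct_mulVec,
    Matrix.vecMul_transpose]
  have h1 : ∀ i, (X *ᵥ v) i = X i ⬝ᵥ v := fun i => rfl
  simp only [dotProduct, Matrix.mulVec_diagonal, h1]
  exact Finset.sum_congr rfl fun i _ => by ring

lemma psd_XDX (X : Matrix (Fin n) (Fin d) ℝ) (c : Fin n → ℝ) (hc : ∀ i, 0 ≤ c i) :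
    (Xᵀ * Matrix.diagonal c * X).PosSemidef := by
  have h : (Matrix.diagonal c).PosSemidef := Matrix.PosSemidef.diagonal (fun i => hc i)
  simpa using h.conjTranspose_mul_mul_same X

lemma symm_dot {B : Matrix (Fin d) (Fin d) ℝ} (hB : B.IsHermitian) (a b : Fin d → ℝ) :
    a ⬝ᵥ (B *ᵥ b) = b ⬝ᵥ (B *ᵥ a) := by
  have hBt : Bᵀ = B := by
    rw [← Matrix.conjTranspose_eq_transpose_of_trivial]; exact hB.eq
  rw [Matrix.dotProduct_mulVec, ← Matrix.mulVec_transpose, hBt, dotProduct_comm]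

/-- Cauchy–Schwarz for a real PSD matrix. -/
lemma psd_cs {B : Matrix (Fin d) (Fin d) ℝ} (hB : B.PosSemidef) (u v : Fin d → ℝ) :
    (u ⬝ᵥ (B *ᵥ v)) ^ 2 ≤ (u ⬝ᵥ (B *ᵥ u)) * (v ⬝ᵥ (B *ᵥ v)) := by
  have key : ∀ t : ℝ, 0 ≤ (v ⬝ᵥ (B *ᵥ v)) * (t * t) + (-2 * (u ⬝ᵥ (B *ᵥ v))) * t
      + (u ⬝ᵥ (B *ᵥ u)) := by
    intro t
    have h0 := hB.dotProduct_mulVec_nonneg (u - t • v)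
    simp only [star_trivial] at h0
    have hexp : (u - t • v) ⬝ᵥ (B *ᵥ (u - t • v)) =
        (v ⬝ᵥ (B *ᵥ v)) * (t * t) + (-2 * (u ⬝ᵥ (B *ᵥ v))) * t + (u ⬝ᵥ (B *ᵥ u)) := by
      simp only [Matrix.mulVec_sub, Matrix.mulVec_smul, sub_dotProduct,
        dotProduct_sub, smul_dotProduct, dotProduct_smul,
        smul_eq_mul]
      rw [symm_dot hB.isHermitian v u]
      ring
    linarith [hexp ▸ h0]
  have hd := discrim_le_zero key
  rw [discrim] at hd
  nlinarith [hd]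

end aux

section aux2
variable {n d : ℕ}

lemma dot_mul_XT (M : Matrix (Fin d) (Fin d) ℝ) (X : Matrix (Fin n) (Fin d) ℝ)
    (u : Fin d → ℝ) (g : Fin n → ℝ) :
    u ⬝ᵥ (M *ᵥ (Xᵀ *ᵥ g)) = ∑ j, g j * (u ⬝ᵥ (M *ᵥ X j)) := by
  have h : Xᵀ *ᵥ g = ∑ j, g j • X j := by
    ext l
    simp [Matrix.mulVec, dotProduct, Matrix.transpose_apply, mul_comm]
  have h2 : M *ᵥ (∑ j, g j • X j) = ∑ j, g j • (M *ᵥ X j) := by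
    rw [← Matrix.mulVecLin_apply, map_sum]
    exact Finset.sum_congr rfl fun j _ => by rw [_root_.map_smul, Matrix.mulVecLin_apply]
  have h3 : ∀ f : Fin n → Fin d → ℝ, u ⬝ᵥ (∑ j, f j) = ∑ j, u ⬝ᵥ f j := by
    intro f
    simp only [dotProduct, Finset.sum_apply, Finset.mul_sum]
    exact Finset.sum_comm
  rw [h, h2, h3]
  exact Finset.sum_congr rfl fun j _ => by rw [dotProduct_smul]; rfl
end aux2

/-- The weighted OLS solution `β_w = (Xᵀ diag(w) X)⁻¹ Xᵀ diag(w) y`. -/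
noncomputable def weightedOLS {n d : ℕ} (X : Matrix (Fin n) (Fin d) ℝ)
    (y : Fin n → ℝ) (w : Fin n → ℝ) : Fin d → ℝ :=
  (Xᵀ * Matrix.diagonal w * X)⁻¹ *ᵥ (Xᵀ *ᵥ fun i => w i * y i)

/-- Decreasing weight within the support of an `(L,R)`-good vector changes every
supported prediction by at most `2‖w−w'‖₁ L R`; consequently `w'` is
`(ηL, ηR)`-good with `η = 1 + 2L‖w−w'‖₁`. -/
theorem goodness_after_weight_decrease {n d : ℕ} (X : Matrix (Fin n) (Fin d) ℝ)
    (y : Fin n → ℝ) (L R : ℝ) (hL : 0 < L) (hR : 0 < R) (w w' : Fin n → ℝ)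
    (hw : ∀ i, 0 ≤ w i ∧ w i ≤ 1) (hw' : ∀ i, 0 ≤ w' i ∧ w' i ≤ 1)
    (hsupp : ∀ i, w' i ≠ 0 → w i ≠ 0)
    (hclose : (∑ i, |w i - w' i|) * L ≤ 1 / 2)
    (hinv : IsUnit (Xᵀ * Matrix.diagonal w * X).det)
    (hlev : ∀ i, w i ≠ 0 → X i ⬝ᵥ ((Xᵀ * Matrix.diagonal w * X)⁻¹ *ᵥ X i) ≤ L)
    (hres : ∀ i, w i ≠ 0 → |X i ⬝ᵥ weightedOLS X y w - y i| ≤ R) :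
    (∀ i, w i ≠ 0 →
      |X i ⬝ᵥ weightedOLS X y w - X i ⬝ᵥ weightedOLS X y w'| ≤
        2 * (∑ i, |w i - w' i|) * L * R) ∧
    IsUnit (Xᵀ * Matrix.diagonal w' * X).det ∧
    (∀ i, w' i ≠ 0 →
      X i ⬝ᵥ ((Xᵀ * Matrix.diagonal w' * X)⁻¹ *ᵥ X i) ≤
        (1 + 2 * L * ∑ i, |w i - w' i|) * L) ∧
    (∀ i, w' i ≠ 0 →
      |X i ⬝ᵥ weightedOLS X y w' - y i| ≤ (1 + 2 * L * ∑ i, |w i - w' i|) * R) := by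
  classical
  set A := Xᵀ * Matrix.diagonal w * X with hA_def
  set A' := Xᵀ * Matrix.diagonal w' * X with hA'_def
  set S := ∑ i, |w i - w' i| with hS_def
  have hS0 : 0 ≤ S := Finset.sum_nonneg fun i _ => abs_nonneg _
  have hSL0 : 0 ≤ S * L := mul_nonneg hS0 hL.le
  have hApsd : A.PosSemidef := psd_XDX X w fun i => (hw i).1
  have hA'psd : A'.PosSemidef := psd_XDX X w' fun i => (hw' i).1
  have hAA : A * A⁻¹ = 1 := Matrix.mul_nonsing_inv A hinv
  have hAA2 : A⁻¹ * A = 1 := Matrix.nonsing_inv_mul A hinv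
  -- A is positive definite
  have hApos : A.PosDef := by
    refine Matrix.PosDef.of_dotProduct_mulVec_pos hApsd.1 fun v hv => ?_
    simp only [star_trivial]
    rcases lt_or_eq_of_le (by simpa using hApsd.dotProduct_mulVec_nonneg v) with h | h
    · exact h
    -- quadratic form is zero: derive v = 0
    exfalso
    have hq : ∑ i, w i * (X i ⬝ᵥ v) ^ 2 = 0 := by
      rw [← quadform_eq]; exact h.symm
    have hterm : ∀ i ∈ Finset.univ, w i * (X i ⬝ᵥ v) ^ 2 = 0 := by
      intro i _
      exact (Finset.sum_eq_zero_iff_of_nonneg (fun i _ =>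
        mul_nonneg (hw i).1 (sq_nonneg _))).mp hq i (Finset.mem_univ i)
    have hAv : A *ᵥ v = 0 := by
      rw [hA_def, ← Matrix.mulVec_mulVec, ← Matrix.mulVec_mulVec]
      have : Matrix.diagonal w *ᵥ (X *ᵥ v) = 0 := by
        ext i
        have := hterm i (Finset.mem_univ i)
        have h0 : w i * (X i ⬝ᵥ v) = 0 := by
          rcases mul_eq_zero.mp this with h | h
          · rw [h, zero_mul]
          · rw [pow_eq_zero_iff (by norm_num) |>.mp h, mul_zero]
        simpa [Matrix.mulVec_diagonal] using (show w i * (X *ᵥ v) i = 0 from h0)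
      rw [this, Matrix.mulVec_zero]
    have : v = 0 := by
      have := congrArg (fun u => A⁻¹ *ᵥ u) hAv
      simpa [Matrix.mulVec_mulVec, hAA2] using this
    exact hv this
  -- Cauchy-Schwarz leverage bound
  have key3 : ∀ (v : Fin d → ℝ) i, w i ≠ 0 → (X i ⬝ᵥ v) ^ 2 ≤ L * (v ⬝ᵥ (A *ᵥ v)) := by
    intro v i hi
    have hcs := psd_cs hApsd (A⁻¹ *ᵥ X i) v
    have e1 : (A⁻¹ *ᵥ X i) ⬝ᵥ (A *ᵥ v) = X i ⬝ᵥ v := by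
      rw [symm_dot hApsd.1, Matrix.mulVec_mulVec, hAA, Matrix.one_mulVec,
        dotProduct_comm]
    have e2 : (A⁻¹ *ᵥ X i) ⬝ᵥ (A *ᵥ (A⁻¹ *ᵥ X i)) = X i ⬝ᵥ (A⁻¹ *ᵥ X i) := by
      rw [Matrix.mulVec_mulVec, hAA, Matrix.one_mulVec, dotProduct_comm]
    rw [e1, e2] at hcs
    have hv0 : 0 ≤ v ⬝ᵥ (A *ᵥ v) := by simpa using hApsd.dotProduct_mulVec_nonneg v
    calc (X i ⬝ᵥ v) ^ 2 ≤ (X i ⬝ᵥ (A⁻¹ *ᵥ X i)) * (v ⬝ᵥ (A *ᵥ v)) := hcs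
      _ ≤ L * (v ⬝ᵥ (A *ᵥ v)) := mul_le_mul_of_nonneg_right (hlev i hi) hv0
  -- lower bound for A' quadratic form
  have hlow : ∀ v : Fin d → ℝ, (1 - S * L) * (v ⬝ᵥ (A *ᵥ v)) ≤ v ⬝ᵥ (A' *ᵥ v) := by
    intro v
    have hv0 : 0 ≤ v ⬝ᵥ (A *ᵥ v) := by simpa using hApsd.dotProduct_mulVec_nonneg v
    have hdiff : v ⬝ᵥ (A *ᵥ v) - v ⬝ᵥ (A' *ᵥ v) = ∑ i, (w i - w' i) * (X i ⬝ᵥ v) ^ 2 := by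
      rw [hA_def, hA'_def, quadform_eq, quadform_eq, ← Finset.sum_sub_distrib]
      exact Finset.sum_congr rfl fun i _ => by ring
    have hb : ∑ i, (w i - w' i) * (X i ⬝ᵥ v) ^ 2 ≤ ∑ i, |w i - w' i| * (L * (v ⬝ᵥ (A *ᵥ v))) := by
      refine Finset.sum_le_sum fun i _ => ?_
      by_cases hwi : w i = 0
      · have hwi' : w' i = 0 := by by_contra h; exact hsupp i h hwi
        simp [hwi, hwi']
      · calc (w i - w' i) * (X i ⬝ᵥ v) ^ 2 ≤ |w i - w' i| * (X i ⬝ᵥ v) ^ 2 :=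
              mul_le_mul_of_nonneg_right (le_abs_self _) (sq_nonneg _)
          _ ≤ |w i - w' i| * (L * (v ⬝ᵥ (A *ᵥ v))) :=
              mul_le_mul_of_nonneg_left (key3 v i hwi) (abs_nonneg _)
    have hsum : ∑ i, |w i - w' i| * (L * (v ⬝ᵥ (A *ᵥ v))) = S * L * (v ⬝ᵥ (A *ᵥ v)) := by
      rw [hS_def, ← Finset.sum_mul]; ring
    nlinarith [hdiff, hb, hsum]
  -- A' is positive definite
  have hA'pos : A'.PosDef := by
    refine Matrix.PosDef.of_dotProduct_mulVec_pos hA'psd.1 fun v hv => ?_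
    simp only [star_trivial]
    have h1 : 0 < v ⬝ᵥ (A *ᵥ v) := by simpa using hApos.dotProduct_mulVec_pos hv
    have h2 := hlow v
    nlinarith
  have hinv' : IsUnit A'.det := hA'pos.det_pos.ne'.isUnit
  have hA'A' : A' * A'⁻¹ = 1 := Matrix.mul_nonsing_inv A' hinv'
  have hA'A'2 : A'⁻¹ * A' = 1 := Matrix.nonsing_inv_mul A' hinv'
  have hA'invpsd : A'⁻¹.PosSemidef := hA'psd.inv
  -- new leverage bound (for all i in supp w)
  have hlev2 : ∀ i, w i ≠ 0 → X i ⬝ᵥ (A'⁻¹ *ᵥ X i) ≤ (1 + 2 * L * S) * L := by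
    intro i hi
    set u := A'⁻¹ *ᵥ X i with hu_def
    set s := X i ⬝ᵥ u with hs_def
    have hA'u : A' *ᵥ u = X i := by
      rw [hu_def, Matrix.mulVec_mulVec, hA'A', Matrix.one_mulVec]
    have huA'u : u ⬝ᵥ (A' *ᵥ u) = s := by rw [hA'u, dotProduct_comm]
    have hk := key3 u i hi
    have hl := hlow u
    rw [huA'u] at hl
    have hq0 : 0 ≤ u ⬝ᵥ (A *ᵥ u) := by simpa using hApsd.dotProduct_mulVec_nonneg u
    rw [← hs_def] at hk
    by_cases hs : s ≤ 0
    · have : (0:ℝ) < (1 + 2 * L * S) * L := by nlinarith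
      linarith
    · push_neg at hs
      have h1 : (1 - S * L) * s ^ 2 ≤ (1 - S * L) * (L * (u ⬝ᵥ (A *ᵥ u))) :=
        mul_le_mul_of_nonneg_left hk (by linarith)
      have h2 : L * ((1 - S * L) * (u ⬝ᵥ (A *ᵥ u))) ≤ L * s :=
        mul_le_mul_of_nonneg_left hl hL.le
      have h3 : (1 - S * L) * s ≤ L := by nlinarith [h1, h2]
      nlinarith [h3, mul_nonneg hSL0 (sub_nonneg.mpr h3),
        mul_nonneg (mul_nonneg (by linarith : (0:ℝ) ≤ 1/2 - S*L) hSL0) hs.le]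
  -- cross leverage bound
  have cross : ∀ i j, w i ≠ 0 → w j ≠ 0 → |X i ⬝ᵥ (A'⁻¹ *ᵥ X j)| ≤ 2 * L := by
    intro i j hi hj
    have hcs := psd_cs hA'invpsd (X i) (X j)
    have hsi : X i ⬝ᵥ (A'⁻¹ *ᵥ X i) ≤ 2 * L := by
      have := hlev2 i hi; nlinarith
    have hsj : X j ⬝ᵥ (A'⁻¹ *ᵥ X j) ≤ 2 * L := by
      have := hlev2 j hj; nlinarith
    have hsi0 : 0 ≤ X i ⬝ᵥ (A'⁻¹ *ᵥ X i) := by simpa using hA'invpsd.dotProduct_mulVec_nonneg (X i)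
    have hsj0 : 0 ≤ X j ⬝ᵥ (A'⁻¹ *ᵥ X j) := by simpa using hA'invpsd.dotProduct_mulVec_nonneg (X j)
    nlinarith [sq_abs (X i ⬝ᵥ (A'⁻¹ *ᵥ X j)), abs_nonneg (X i ⬝ᵥ (A'⁻¹ *ᵥ X j))]
  -- prediction identity
  set β := weightedOLS X y w with hβ_def
  have hβ : β = A⁻¹ *ᵥ (Xᵀ *ᵥ fun i => w i * y i) := rfl
  have hβ' : weightedOLS X y w' = A'⁻¹ *ᵥ (Xᵀ *ᵥ fun i => w' i * y i) := rfl
  have hXD : ∀ (c : Fin n → ℝ) (v : Fin d → ℝ),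
      (Xᵀ * Matrix.diagonal c * X) *ᵥ v = Xᵀ *ᵥ (fun j => c j * (X j ⬝ᵥ v)) := by
    intro c v
    have e : Matrix.diagonal c *ᵥ (X *ᵥ v) = fun j => c j * (X j ⬝ᵥ v) := by
      ext j; rw [Matrix.mulVec_diagonal]; rfl
    rw [← Matrix.mulVec_mulVec, ← Matrix.mulVec_mulVec, e]
  have hAβ : A *ᵥ β = Xᵀ *ᵥ (fun i => w i * y i) := by
    rw [hβ, Matrix.mulVec_mulVec, hAA, Matrix.one_mulVec]
  have hzero : Xᵀ *ᵥ (fun j => w j * (X j ⬝ᵥ β - y j)) = 0 := by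
    have e : (fun j => w j * (X j ⬝ᵥ β - y j)) =
        (fun j => w j * (X j ⬝ᵥ β)) - fun j => w j * y j := by
      ext j; simp only [Pi.sub_apply]; ring
    rw [e, Matrix.mulVec_sub, ← hXD w β]
    rw [hA_def] at hAβ
    rw [hAβ, sub_self]
  have hkey : A' *ᵥ β - Xᵀ *ᵥ (fun j => w' j * y j) =
      Xᵀ *ᵥ (fun j => (w j - w' j) * (y j - X j ⬝ᵥ β)) := by
    have e1 : A' *ᵥ β = Xᵀ *ᵥ (fun j => w' j * (X j ⬝ᵥ β)) := by
      rw [hA'_def]; exact hXD w' β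
    have e3 : (fun j => w' j * (X j ⬝ᵥ β)) - (fun j => w' j * y j) =
        (fun j => w j * (X j ⬝ᵥ β - y j)) + fun j => (w j - w' j) * (y j - X j ⬝ᵥ β) := by
      ext j; simp only [Pi.sub_apply, Pi.add_apply]; ring
    rw [e1, ← Matrix.mulVec_sub, e3, Matrix.mulVec_add, hzero, zero_add]
  have hdiffvec : β - weightedOLS X y w' =
      A'⁻¹ *ᵥ (Xᵀ *ᵥ fun j => (w j - w' j) * (y j - X j ⬝ᵥ β)) := by
    have e4 : A'⁻¹ *ᵥ (A' *ᵥ β) = β := by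
      rw [Matrix.mulVec_mulVec, hA'A'2, Matrix.one_mulVec]
    rw [← hkey, Matrix.mulVec_sub, e4, hβ']
  have hid : ∀ i, X i ⬝ᵥ β - X i ⬝ᵥ weightedOLS X y w' =
      ∑ j, ((w j - w' j) * (y j - X j ⬝ᵥ β)) * (X i ⬝ᵥ (A'⁻¹ *ᵥ X j)) := by
    intro i
    rw [← dotProduct_sub, hdiffvec, dot_mul_XT]
  have bound1 : ∀ i, w i ≠ 0 → |X i ⬝ᵥ β - X i ⬝ᵥ weightedOLS X y w'| ≤ 2 * S * L * R := by
    intro i hi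
    rw [hid i]
    have step : ∀ j ∈ Finset.univ, |((w j - w' j) * (y j - X j ⬝ᵥ β)) * (X i ⬝ᵥ (A'⁻¹ *ᵥ X j))|
        ≤ |w j - w' j| * (R * (2 * L)) := by
      intro j _
      by_cases hj : w j - w' j = 0
      · simp only [hj, zero_mul, abs_zero]
        positivity
      · have hwj : w j ≠ 0 := by
          intro h0
          have : w' j = 0 := by by_contra hc; exact hsupp j hc h0
          rw [h0, this] at hj; simp at hj
        have hr : |y j - X j ⬝ᵥ β| ≤ R := by
          rw [abs_sub_comm]; exact hres j hwj
        have hc := cross i j hi hwj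
        rw [abs_mul, abs_mul]
        calc |w j - w' j| * |y j - X j ⬝ᵥ β| * |X i ⬝ᵥ (A'⁻¹ *ᵥ X j)|
            ≤ |w j - w' j| * R * |X i ⬝ᵥ (A'⁻¹ *ᵥ X j)| := by
              apply mul_le_mul_of_nonneg_right _ (abs_nonneg _)
              exact mul_le_mul_of_nonneg_left hr (abs_nonneg _)
          _ ≤ |w j - w' j| * R * (2 * L) := by
              apply mul_le_mul_of_nonneg_left hc
              exact mul_nonneg (abs_nonneg _) hR.le
          _ = |w j - w' j| * (R * (2 * L)) := by ring
    calc |∑ j, ((w j - w' j) * (y j - X j ⬝ᵥ β)) * (X i ⬝ᵥ (A'⁻¹ *ᵥ X j))|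
        ≤ ∑ j, |((w j - w' j) * (y j - X j ⬝ᵥ β)) * (X i ⬝ᵥ (A'⁻¹ *ᵥ X j))| :=
          Finset.abs_sum_le_sum_abs _ _
      _ ≤ ∑ j, |w j - w' j| * (R * (2 * L)) := Finset.sum_le_sum step
      _ = S * (R * (2 * L)) := by rw [hS_def, ← Finset.sum_mul]
      _ = 2 * S * L * R := by ring
  refine ⟨fun i hi => bound1 i hi, hinv', fun i hi' => ?_, fun i hi' => ?_⟩
  · have h := hlev2 i (hsupp i hi')
    calc X i ⬝ᵥ (A'⁻¹ *ᵥ X i) ≤ (1 + 2 * L * S) * L := h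
      _ = (1 + 2 * L * ∑ i, |w i - w' i|) * L := by rw [hS_def]
  · have hi := hsupp i hi'
    have h1 := hres i hi
    have h2 := bound1 i hi
    have h3 : |X i ⬝ᵥ weightedOLS X y w' - y i| ≤
        |X i ⬝ᵥ weightedOLS X y w' - X i ⬝ᵥ β| + |X i ⬝ᵥ β - y i| :=
      abs_sub_le _ _ _
    rw [abs_sub_comm] at h2
    have : (1 + 2 * L * S) * R = R + 2 * S * L * R := by ring
    calc |X i ⬝ᵥ weightedOLS X y w' - y i| ≤ 2 * S * L * R + R := by linarith
      _ = (1 + 2 * L * S) * R := by ring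
      _ = (1 + 2 * L * ∑ i, |w i - w' i|) * R := by rw [hS_def]
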